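/- At every point during the execution of PivotTracking (after serving each request), the current center belongs to the candidate set C. Consequently, PivotTracking pays exactly 2 on every request on which it applies its union behavior. -/

import Mathlib

/-- Cost of serving request `r` when node `c` is at the center of the star. -/
def serveCost {V : Type*} [DecidableEq V] (c : V) (r : V × V) : ℕ :=
  if c = r.1 ∨ c = r.2 then 1 else 2

/-- One step of the deterministic algorithm PivotTracking (state = (center,
candidate set)); tie-breaking in the intersection behavior by the fixed rule `tb`. -/
def ptStep {V : Type*} [DecidableEq V] (tb : V → V → V) (st : V × Finset V)
    (r : V × V) : V × Finset V :=
  if (st.2 ∩ {r.1, r.2}).Nonempty then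
    let C' := st.2 ∩ {r.1, r.2}
    (if st.1 ∈ C' then st.1
     else if C' = {r.1, r.2} then tb r.1 r.2
     else if r.1 ∈ C' then r.1 else r.2, C')
  else (st.1, st.2 ∪ {r.1, r.2})

/-- The sequence of states of PivotTracking: `(ptStates tb c₀ σ).get i` is the
state (center, candidate set) just before the `i`-th request is served. -/
def ptStates {V : Type*} [DecidableEq V] (tb : V → V → V) (c₀ : V)
    (σ : List (V × V)) : List (V × Finset V) :=
  σ.scanl (ptStep tb) (c₀, {c₀})

/-- The cost (migration plus serving) PivotTracking pays on the `i`-th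
request of `σ` (0-based). -/
def ptPay {V : Type*} [DecidableEq V] (tb : V → V → V) (c₀ : V)
    (σ : List (V × V)) (i : ℕ) : ℕ :=
  (if ((ptStates tb c₀ σ).getD (i + 1) (c₀, {c₀})).1
      = ((ptStates tb c₀ σ).getD i (c₀, {c₀})).1 then 0 else 1)
    + serveCost ((ptStates tb c₀ σ).getD (i + 1) (c₀, {c₀})).1 (σ.getD i (c₀, c₀))

lemma ptStep_mem {V : Type*} [DecidableEq V] (tb : V → V → V)
    (htb : ∀ u v : V, tb u v = u ∨ tb u v = v) (st : V × Finset V) (r : V × V)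
    (h : st.1 ∈ st.2) : (ptStep tb st r).1 ∈ (ptStep tb st r).2 := by
  unfold ptStep
  split
  · next hne =>
    dsimp only
    split
    · assumption
    · next h1 =>
      split
      · next h2 =>
        rw [h2]
        rcases htb r.1 r.2 with h3 | h3 <;> rw [h3] <;> simp
      · next h2 =>
        split
        · assumption
        · next h3 =>
          obtain ⟨x, hx⟩ := hne
          have hx' := hx
          rw [Finset.mem_inter, Finset.mem_insert, Finset.mem_singleton] at hx'
          rcases hx'.2 with rfl | rfl
          · exact absurd hx h3
          · exact hx
  · exact Finset.mem_union_left _ h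

lemma ptStates_getD_succ {V : Type*} [DecidableEq V] (tb : V → V → V) (c₀ : V)
    (σ : List (V × V)) (i : ℕ) (hi : i < σ.length) :
    (ptStates tb c₀ σ).getD (i + 1) (c₀, {c₀})
      = ptStep tb ((ptStates tb c₀ σ).getD i (c₀, {c₀})) (σ.getD i (c₀, c₀)) := by
  unfold ptStates
  have hlen : (σ.scanl (ptStep tb) (c₀, ({c₀} : Finset V))).length = σ.length + 1 :=
    List.length_scanl
  rw [List.getD_eq_getElem _ _ (by omega), List.getD_eq_getElem _ _ (by omega),
    List.getD_eq_getElem _ _ hi]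
  exact List.getElem_succ_scanl (by omega)

/-- At every point during the execution of PivotTracking
(after serving each request), the current center belongs to the candidate set
`C`.  Consequently, PivotTracking pays exactly `2` on every request on which
it applies its union behavior. -/
theorem pivotTracking_center_mem_candidates_and_union_pays_two
    {V : Type*} [DecidableEq V] [Fintype V] (hn : 3 ≤ Fintype.card V)
    (c₀ : V) (σ : List (V × V)) (hσ : ∀ r ∈ σ, r.1 ≠ r.2)
    (tb : V → V → V) (htb : ∀ u v : V, tb u v = u ∨ tb u v = v) :
    (∀ i ≤ σ.length,
      ((ptStates tb c₀ σ).getD i (c₀, {c₀})).1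
        ∈ ((ptStates tb c₀ σ).getD i (c₀, {c₀})).2) ∧
    (∀ i < σ.length,
      ¬ (((ptStates tb c₀ σ).getD i (c₀, {c₀})).2 ∩
          {(σ.getD i (c₀, c₀)).1, (σ.getD i (c₀, c₀)).2}).Nonempty →
        ptPay tb c₀ σ i = 2) := by
  have hlen : (ptStates tb c₀ σ).length = σ.length + 1 := List.length_scanl
  have hzero : (ptStates tb c₀ σ).getD 0 (c₀, {c₀}) = (c₀, ({c₀} : Finset V)) := by
    rw [List.getD_eq_getElem _ _ (by omega)]
    exact List.getElem_scanl_zero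
  have hinv : ∀ i ≤ σ.length,
      ((ptStates tb c₀ σ).getD i (c₀, {c₀})).1
        ∈ ((ptStates tb c₀ σ).getD i (c₀, {c₀})).2 := by
    intro i
    induction i with
    | zero => intro _; rw [hzero]; simp
    | succ i ih =>
      intro hi
      rw [ptStates_getD_succ tb c₀ σ i (by omega)]
      exact ptStep_mem tb htb _ _ (ih (by omega))
  refine ⟨hinv, fun i hi hcap => ?_⟩
  have hstep := ptStates_getD_succ tb c₀ σ i hi
  set st := (ptStates tb c₀ σ).getD i (c₀, {c₀}) with hst
  set r := σ.getD i (c₀, c₀) with hr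
  have hptstep : ptStep tb st r = (st.1, st.2 ∪ {r.1, r.2}) := by
    unfold ptStep
    rw [if_neg hcap]
  have hcenter : st.1 ∉ ({r.1, r.2} : Finset V) := by
    intro hmem
    exact hcap ⟨st.1, Finset.mem_inter.2 ⟨hinv i (le_of_lt hi), hmem⟩⟩
  simp only [Finset.mem_insert, Finset.mem_singleton, not_or] at hcenter
  unfold ptPay
  rw [← hst, ← hr, hstep, hptstep]
  simp [serveCost, hcenter.1, hcenter.2]
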